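/- Let x = (x₁,x₂,x₃) ∈ ℤ³ with x₁² − 2x₂² + x₃² = 2. Then: (1) x is in the H-orbit of (1,0,1) if and only if both x₁ and x₃ are congruent to 1 or 3 modulo 8; (2) x is in the H-orbit of (−1,0,−1) if and only if both x₁ and x₃ are congruent to −1 or −3 modulo 8; (3) x is in the H-orbit of (−1,0,1) if and only if one of x₁, x₃ is congruent to −1 or −3 modulo 8 and the other is congruent to 1 or 3 modulo 8; (4) x is in the H-orbit of (2,1,0) if and only if x₁ or x₃ is congruent to 2 modulo 8; (5) x is in the H-orbit of (−2,1,0) if and only if x₁ or x₃ is congruent to −2 modulo 8. Here x is in the H-orbit of δ means there exists M ∈ H with x = Mδ as column vectors. -/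

import Mathlib

open Matrix

def Bmat : Matrix (Fin 3) (Fin 3) ℤ := !![3, 4, 0; 2, 3, 0; 0, 0, 1]
def Jmat : Matrix (Fin 3) (Fin 3) ℤ := !![0, 0, 1; 0, 1, 0; 1, 0, 0]

def BGL : GL (Fin 3) ℤ :=
  ⟨Bmat, !![3, -4, 0; -2, 3, 0; 0, 0, 1], by decide, by decide⟩

def JGL : GL (Fin 3) ℤ := ⟨Jmat, Jmat, by decide, by decide⟩

def H : Subgroup (GL (Fin 3) ℤ) := Subgroup.closure {BGL, JGL}

/-- `x` is in the `H`-orbit of `δ` if `x = M δ` for some `M ∈ H`. -/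
def InOrbit (x δ : Fin 3 → ℤ) : Prop :=
  ∃ M ∈ H, x = (M : Matrix (Fin 3) (Fin 3) ℤ).mulVec δ

def Bimat : Matrix (Fin 3) (Fin 3) ℤ := !![3, -4, 0; -2, 3, 0; 0, 0, 1]

lemma mulVec3 (A : Matrix (Fin 3) (Fin 3) ℤ) (v : Fin 3 → ℤ) :
    A.mulVec v = ![A 0 0 * v 0 + A 0 1 * v 1 + A 0 2 * v 2,
      A 1 0 * v 0 + A 1 1 * v 1 + A 1 2 * v 2,
      A 2 0 * v 0 + A 2 1 * v 1 + A 2 2 * v 2] := by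
  funext i
  fin_cases i <;> simp [Matrix.mulVec, dotProduct, Fin.sum_univ_three]

def qf (v : Fin 3 → ℤ) : ℤ := v 0 ^ 2 - 2 * v 1 ^ 2 + v 2 ^ 2

def cl (a : ZMod 8) : ℕ :=
  if a = 1 ∨ a = 3 then 0 else if a = 5 ∨ a = 7 then 1
  else if a = 2 then 2 else if a = 6 then 3 else 4

def pcl (a b : ZMod 8) : ℕ × ℕ := (min (cl a) (cl b), max (cl a) (cl b))

def inv8 (v : Fin 3 → ℤ) : ℕ × ℕ := pcl ((v 0 : ZMod 8)) ((v 2 : ZMod 8))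

lemma zstepB : ∀ a b c : ZMod 8, a^2 - 2*b^2 + c^2 = 2 → pcl (3*a+4*b) c = pcl a c := by decide
lemma zstepBi : ∀ a b c : ZMod 8, a^2 - 2*b^2 + c^2 = 2 → pcl (3*a-4*b) c = pcl a c := by decide

lemma qcast {v : Fin 3 → ℤ} (h : qf v = 2) :
    ((v 0 : ZMod 8))^2 - 2*((v 1 : ZMod 8))^2 + ((v 2 : ZMod 8))^2 = 2 := by
  have : ((qf v : ℤ) : ZMod 8) = ((2:ℤ) : ZMod 8) := by rw [h]
  unfold qf at this
  push_cast at this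
  convert this using 2


lemma qf_vec (a b c : ℤ) : qf ![a,b,c] = a^2 - 2*b^2 + c^2 := by
  simp [qf, Matrix.cons_val_zero, Matrix.cons_val_one, Matrix.head_cons]

lemma inv8_vec (a b c : ℤ) : inv8 ![a,b,c] = pcl (a : ZMod 8) (c : ZMod 8) := by
  simp [inv8, Matrix.cons_val_zero, Matrix.cons_val_one, Matrix.head_cons]

lemma vec_eval (a b c : ℤ) : (![a,b,c] : Fin 3 → ℤ) 0 = a ∧ (![a,b,c] : Fin 3 → ℤ) 1 = b ∧ (![a,b,c] : Fin 3 → ℤ) 2 = c := by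
  refine ⟨rfl, rfl, rfl⟩

lemma stepB (v : Fin 3 → ℤ) (h : qf v = 2) :
    qf (Bmat.mulVec v) = 2 ∧ inv8 (Bmat.mulVec v) = inv8 v := by
  have hv : Bmat.mulVec v = ![3*v 0 + 4*v 1, 2*v 0 + 3*v 1, v 2] := by
    rw [mulVec3]; norm_num [Bmat, Matrix.vecHead, Matrix.vecTail, Matrix.cons_val_two]
  rw [hv, qf_vec, inv8_vec]
  constructor
  · unfold qf at h; ring_nf; ring_nf at h; linarith
  · have := zstepB (v 0) (v 1) (v 2) (qcast h)
    rw [inv8]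
    push_cast
    convert this using 2 <;> push_cast <;> ring

lemma stepBi (v : Fin 3 → ℤ) (h : qf v = 2) :
    qf (Bimat.mulVec v) = 2 ∧ inv8 (Bimat.mulVec v) = inv8 v := by
  have hv : Bimat.mulVec v = ![3*v 0 - 4*v 1, -2*v 0 + 3*v 1, v 2] := by
    rw [mulVec3]; norm_num [Bimat, Matrix.vecHead, Matrix.vecTail, Matrix.cons_val_two]; ring
  rw [hv, qf_vec, inv8_vec]
  constructor
  · unfold qf at h; ring_nf; ring_nf at h; linarith
  · have := zstepBi (v 0) (v 1) (v 2) (qcast h)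
    rw [inv8]
    push_cast
    convert this using 2

lemma stepJ (v : Fin 3 → ℤ) (h : qf v = 2) :
    qf (Jmat.mulVec v) = 2 ∧ inv8 (Jmat.mulVec v) = inv8 v := by
  have hv : Jmat.mulVec v = ![v 2, v 1, v 0] := by
    rw [mulVec3]; funext i; fin_cases i <;> norm_num [Jmat, Matrix.vecHead, Matrix.vecTail, Matrix.cons_val_two]
  rw [hv, qf_vec, inv8_vec]
  constructor
  · unfold qf at h; linarith
  · rw [inv8, pcl, pcl, min_comm, max_comm]

-- the key invariance lemma
lemma orbit_invariant {M : GL (Fin 3) ℤ} (hM : M ∈ H) :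
    ∀ v : Fin 3 → ℤ, qf v = 2 →
      qf ((M : Matrix (Fin 3) (Fin 3) ℤ).mulVec v) = 2 ∧
      inv8 ((M : Matrix (Fin 3) (Fin 3) ℤ).mulVec v) = inv8 v := by
  let Q : GL (Fin 3) ℤ → Prop := fun g =>
    ∀ v : Fin 3 → ℤ, qf v = 2 →
      qf ((g : Matrix (Fin 3) (Fin 3) ℤ).mulVec v) = 2 ∧
      inv8 ((g : Matrix (Fin 3) (Fin 3) ℤ).mulVec v) = inv8 v
  have hQB : Q BGL := fun v hv => stepB v hv
  have hQBi : Q BGL⁻¹ := fun v hv => stepBi v hv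
  have hQJ : Q JGL := fun v hv => stepJ v hv
  have key : ∀ g ∈ H, Q g ∧ Q g⁻¹ := by
    intro g hg
    refine Subgroup.closure_induction ?_ ?_ ?_ ?_ hg
    · rintro x (rfl | rfl)
      · exact ⟨hQB, hQBi⟩
      · refine ⟨hQJ, ?_⟩
        have : JGL⁻¹ = JGL := by
          ext : 1
          rfl
        rw [this]; exact hQJ
    · constructor <;> intro v hv <;> exact ⟨by simpa using hv, by simp⟩
    · rintro a b _ _ ⟨ha, hai⟩ ⟨hb, hbi⟩
      constructor
      · intro v hv
        have h1 := hb v hv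
        have h2 := ha _ h1.1
        rw [Matrix.mulVec_mulVec, ← Units.val_mul] at h2
        exact ⟨h2.1, h2.2.trans h1.2⟩
      · intro v hv
        have h1 := hai v hv
        have h2 := hbi _ h1.1
        rw [Matrix.mulVec_mulVec, ← Units.val_mul, ← _root_.mul_inv_rev] at h2
        exact ⟨h2.1, h2.2.trans h1.2⟩
    · rintro a _ ⟨ha, hai⟩
      exact ⟨hai, by simpa using ha⟩
  exact (key M hM).1

lemma hBH : BGL ∈ H := Subgroup.subset_closure (Set.mem_insert _ _)
lemma hJH : JGL ∈ H := Subgroup.subset_closure (Set.mem_insert_of_mem _ rfl)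
lemma hBiH : BGL⁻¹ ∈ H := inv_mem hBH

lemma transport {g : GL (Fin 3) ℤ} (hg : g ∈ H) {x y δ : Fin 3 → ℤ}
    (hxy : x = (g : Matrix (Fin 3) (Fin 3) ℤ).mulVec y) (hy : InOrbit y δ) :
    InOrbit x δ := by
  obtain ⟨M, hM, rfl⟩ := hy
  exact ⟨g * M, mul_mem hg hM,
    by rw [hxy, Matrix.mulVec_mulVec, Units.val_mul]⟩

def Goal (x : Fin 3 → ℤ) : Prop :=
  InOrbit x ![1,0,1] ∨ InOrbit x ![-1,0,-1] ∨ InOrbit x ![-1,0,1] ∨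
    InOrbit x ![2,1,0] ∨ InOrbit x ![-2,1,0]

lemma transport5 {g : GL (Fin 3) ℤ} (hg : g ∈ H) {x y : Fin 3 → ℤ}
    (hxy : x = (g : Matrix (Fin 3) (Fin 3) ℤ).mulVec y) (hy : Goal y) : Goal x := by
  rcases hy with h|h|h|h|h
  · exact Or.inl (transport hg hxy h)
  · exact Or.inr (Or.inl (transport hg hxy h))
  · exact Or.inr (Or.inr (Or.inl (transport hg hxy h)))
  · exact Or.inr (Or.inr (Or.inr (Or.inl (transport hg hxy h))))
  · exact Or.inr (Or.inr (Or.inr (Or.inr (transport hg hxy h))))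

lemma self_orbit (δ : Fin 3 → ℤ) : InOrbit δ δ :=
  ⟨1, one_mem _, by simp⟩

-- coercions of group elements to matrices
lemma coeB : ((BGL : GL (Fin 3) ℤ) : Matrix (Fin 3) (Fin 3) ℤ) = Bmat := rfl
lemma coeBi : ((BGL⁻¹ : GL (Fin 3) ℤ) : Matrix (Fin 3) (Fin 3) ℤ) = Bimat := rfl
lemma coeJ : ((JGL : GL (Fin 3) ℤ) : Matrix (Fin 3) (Fin 3) ℤ) = Jmat := rfl

-- orbits of the small solutions
lemma goal_pp : Goal ![1,0,1] := Or.inl (self_orbit _)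
lemma goal_nn : Goal ![-1,0,-1] := Or.inr (Or.inl (self_orbit _))
lemma goal_np : Goal ![-1,0,1] := Or.inr (Or.inr (Or.inl (self_orbit _)))
lemma goal_pn : Goal ![1,0,-1] := by
  refine transport5 hJH ?_ goal_np
  rw [coeJ, mulVec3]; funext i; fin_cases i <;> norm_num [Jmat, Matrix.vecHead, Matrix.vecTail, Matrix.cons_val_two]
lemma goal_t1 : Goal ![2,1,0] := Or.inr (Or.inr (Or.inr (Or.inl (self_orbit _))))
lemma goal_t2 : Goal ![2,-1,0] := by
  refine transport5 hBiH ?_ goal_t1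
  rw [coeBi, mulVec3]; funext i; fin_cases i <;> norm_num [Bimat, Matrix.vecHead, Matrix.vecTail, Matrix.cons_val_two]
lemma goal_s1 : Goal ![-2,1,0] := Or.inr (Or.inr (Or.inr (Or.inr (self_orbit _))))
lemma goal_s2 : Goal ![-2,-1,0] := by
  refine transport5 hBH ?_ goal_s1
  rw [coeB, mulVec3]; funext i; fin_cases i <;> norm_num [Bmat, Matrix.vecHead, Matrix.vecTail, Matrix.cons_val_two]
lemma goal_t3 : Goal ![0,1,2] := by
  refine transport5 hJH ?_ goal_t1
  rw [coeJ, mulVec3]; funext i; fin_cases i <;> norm_num [Jmat, Matrix.vecHead, Matrix.vecTail, Matrix.cons_val_two]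
lemma goal_t4 : Goal ![0,-1,2] := by
  refine transport5 hJH ?_ goal_t2
  rw [coeJ, mulVec3]; funext i; fin_cases i <;> norm_num [Jmat, Matrix.vecHead, Matrix.vecTail, Matrix.cons_val_two]
lemma goal_s3 : Goal ![0,1,-2] := by
  refine transport5 hJH ?_ goal_s1
  rw [coeJ, mulVec3]; funext i; fin_cases i <;> norm_num [Jmat, Matrix.vecHead, Matrix.vecTail, Matrix.cons_val_two]
lemma goal_s4 : Goal ![0,-1,-2] := by
  refine transport5 hJH ?_ goal_s2
  rw [coeJ, mulVec3]; funext i; fin_cases i <;> norm_num [Jmat, Matrix.vecHead, Matrix.vecTail, Matrix.cons_val_two]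

lemma natAbs_lt_of_sq_lt {a b : ℤ} (h : a^2 < b^2) : a.natAbs < b.natAbs := by
  have h1 : (a.natAbs : ℤ)^2 < (b.natAbs : ℤ)^2 := by
    simpa [Int.natAbs_sq, sq_abs] using h
  have h2 : (a.natAbs)^2 < (b.natAbs)^2 := by exact_mod_cast h1
  by_contra hc
  push_neg at hc
  exact absurd (Nat.pow_le_pow_left hc 2) (not_le.mpr h2)

lemma int_sq_eq_one {a : ℤ} (h : a^2 = 1) : a = 1 ∨ a = -1 := by
  have h2 : (a-1)*(a+1) = 0 := by ring_nf; omega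
  rcases mul_eq_zero.mp h2 with h | h
  · left; omega
  · right; omega

lemma int_sq_eq_four {a : ℤ} (h : a^2 = 4) : a = 2 ∨ a = -2 := by
  have h2 : (a-2)*(a+2) = 0 := by ring_nf; omega
  rcases mul_eq_zero.mp h2 with h | h
  · left; omega
  · right; omega

lemma reduce_core {a b : ℤ} (h : (a - b) * (a - 2*b) < 0) :
    (-2*a + 3*b)^2 < b^2 := by nlinarith [h]

set_option maxHeartbeats 1000000 in
lemma descent : ∀ n : ℕ, ∀ x : Fin 3 → ℤ, (x 1).natAbs = n → qf x = 2 → Goal x := by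
  intro n
  induction n using Nat.strong_induction_on with
  | _ n ih =>
  intro x hn hq
  have hq' : x 0 ^ 2 - 2 * x 1 ^ 2 + x 2 ^ 2 = 2 := hq
  by_cases h10 : x 1 = 0
  · -- base: x0² + x2² = 2
    have h0 : -1 ≤ x 0 ∧ x 0 ≤ 1 := by constructor <;> nlinarith [sq_nonneg (x 2)]
    have h2 : -1 ≤ x 2 ∧ x 2 ≤ 1 := by constructor <;> nlinarith [sq_nonneg (x 0)]
    have hvals : (x 0 = 1 ∨ x 0 = -1) ∧ (x 2 = 1 ∨ x 2 = -1) := by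
      rcases h0 with ⟨h0a, h0b⟩
      rcases h2 with ⟨h2a, h2b⟩
      constructor
      · rcases (by omega : x 0 = -1 ∨ x 0 = 0 ∨ x 0 = 1) with h|h|h
        · exact Or.inr h
        · exfalso; rw [h, h10] at hq'; nlinarith
        · exact Or.inl h
      · rcases (by omega : x 2 = -1 ∨ x 2 = 0 ∨ x 2 = 1) with h|h|h
        · exact Or.inr h
        · exfalso; rw [h, h10] at hq'; nlinarith
        · exact Or.inl h
    rcases hvals with ⟨h0v | h0v, h2v | h2v⟩ <;>
      [ (have hx : x = ![1,0,1] := by funext i; fin_cases i <;> simp [h0v, h10, h2v]);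
        (have hx : x = ![1,0,-1] := by funext i; fin_cases i <;> simp [h0v, h10, h2v]);
        (have hx : x = ![-1,0,1] := by funext i; fin_cases i <;> simp [h0v, h10, h2v]);
        (have hx : x = ![-1,0,-1] := by funext i; fin_cases i <;> simp [h0v, h10, h2v])] <;>
      rw [hx]
    · exact goal_pp
    · exact goal_pn
    · exact goal_np
    · exact goal_nn
  · -- inductive step
    by_cases c1 : (x 0 - x 1) * (x 0 - 2 * x 1) < 0
    · set y : Fin 3 → ℤ := ![3*x 0 - 4*x 1, -2*x 0 + 3*x 1, x 2] with hy
      have hqy : qf y = 2 := by rw [hy, qf_vec]; nlinarith [hq']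
      have hlt : (y 1).natAbs < n := by
        rw [← hn]
        refine natAbs_lt_of_sq_lt ?_
        have : y 1 = -2*x 0 + 3*x 1 := rfl
        rw [this]
        exact reduce_core c1
      have hgy : Goal y := ih _ hlt y rfl hqy
      refine transport5 hBH ?_ hgy
      rw [coeB, mulVec3, hy]
      funext i; fin_cases i <;> simp [Bmat, Matrix.vecHead, Matrix.vecTail] <;> ring
    · by_cases c2 : (x 0 + x 1) * (x 0 + 2 * x 1) < 0
      · set y : Fin 3 → ℤ := ![3*x 0 + 4*x 1, 2*x 0 + 3*x 1, x 2] with hy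
        have hqy : qf y = 2 := by rw [hy, qf_vec]; nlinarith [hq']
        have hlt : (y 1).natAbs < n := by
          rw [← hn]
          refine natAbs_lt_of_sq_lt ?_
          have h5 : y 1 = 2*x 0 + 3*x 1 := rfl
          rw [h5]
          have := reduce_core (a := -(x 0)) (b := x 1) (by nlinarith [c2])
          nlinarith [this]
        have hgy : Goal y := ih _ hlt y rfl hqy
        refine transport5 hBiH ?_ hgy
        rw [coeBi, mulVec3, hy]
        funext i; fin_cases i <;> simp [Bimat, Matrix.vecHead, Matrix.vecTail] <;> ring
      · by_cases c3 : (x 2 - x 1) * (x 2 - 2 * x 1) < 0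
        · set y : Fin 3 → ℤ := ![3*x 2 - 4*x 1, -2*x 2 + 3*x 1, x 0] with hy
          have hqy : qf y = 2 := by rw [hy, qf_vec]; nlinarith [hq']
          have hlt : (y 1).natAbs < n := by
            rw [← hn]
            refine natAbs_lt_of_sq_lt ?_
            have h5 : y 1 = -2*x 2 + 3*x 1 := rfl
            rw [h5]
            exact reduce_core c3
          have hgy : Goal y := ih _ hlt y rfl hqy
          have hg2 : Goal ![x 2, x 1, x 0] := by
            refine transport5 hBH ?_ hgy
            rw [coeB, mulVec3, hy]
            funext i; fin_cases i <;> simp [Bmat, Matrix.vecHead, Matrix.vecTail] <;> ring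
          refine transport5 hJH ?_ hg2
          rw [coeJ, mulVec3]
          funext i; fin_cases i <;> simp [Jmat, Matrix.vecHead, Matrix.vecTail]
        · by_cases c4 : (x 2 + x 1) * (x 2 + 2 * x 1) < 0
          · set y : Fin 3 → ℤ := ![3*x 2 + 4*x 1, 2*x 2 + 3*x 1, x 0] with hy
            have hqy : qf y = 2 := by rw [hy, qf_vec]; nlinarith [hq']
            have hlt : (y 1).natAbs < n := by
              rw [← hn]
              refine natAbs_lt_of_sq_lt ?_
              have h5 : y 1 = 2*x 2 + 3*x 1 := rfl
              rw [h5]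
              have := reduce_core (a := -(x 2)) (b := x 1) (by nlinarith [c4])
              nlinarith [this]
            have hgy : Goal y := ih _ hlt y rfl hqy
            have hg2 : Goal ![x 2, x 1, x 0] := by
              refine transport5 hBiH ?_ hgy
              rw [coeBi, mulVec3, hy]
              funext i; fin_cases i <;> simp [Bimat, Matrix.vecHead, Matrix.vecTail] <;> ring
            refine transport5 hJH ?_ hg2
            rw [coeJ, mulVec3]
            funext i; fin_cases i <;> simp [Jmat, Matrix.vecHead, Matrix.vecTail]
          · -- no reduction possible: small solutions
            push_neg at c1 c2 c3 c4
            have hn1 : 1 ≤ x 1 ^ 2 := by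
              rcases (by omega : 1 ≤ x 1 ∨ x 1 ≤ -1) with h|h <;> nlinarith
            have hA : x 0 ^ 2 ≤ x 1 ^ 2 ∨ 4 * x 1 ^ 2 ≤ x 0 ^ 2 := by
              by_contra hc
              push_neg at hc
              obtain ⟨u1, u2⟩ := hc
              nlinarith [mul_nonneg c1 c2, mul_pos (by linarith : (0:ℤ) < x 0 ^2 - x 1^2) (by linarith : (0:ℤ) < 4*x 1^2 - x 0^2)]
            have hC : x 2 ^ 2 ≤ x 1 ^ 2 ∨ 4 * x 1 ^ 2 ≤ x 2 ^ 2 := by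
              by_contra hc
              push_neg at hc
              obtain ⟨u1, u2⟩ := hc
              nlinarith [mul_nonneg c3 c4, mul_pos (by linarith : (0:ℤ) < x 2 ^2 - x 1^2) (by linarith : (0:ℤ) < 4*x 1^2 - x 2^2)]
            rcases hA with hA | hA <;> rcases hC with hC | hC
            · exfalso; nlinarith
            · -- x0 small, x2 big : x0 = 0, x2² = 4, x1² = 1
              have hx1 : x 1 ^ 2 = 1 := by nlinarith
              have hx0 : x 0 = 0 := by nlinarith
              have hx2 : x 2 ^ 2 = 4 := by nlinarith
              rcases int_sq_eq_one hx1 with h1v | h1v <;> rcases int_sq_eq_four hx2 with h2v | h2v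
              · have hx : x = ![0,1,2] := by funext i; fin_cases i <;> simp [hx0, h1v, h2v]
                rw [hx]; exact goal_t3
              · have hx : x = ![0,1,-2] := by funext i; fin_cases i <;> simp [hx0, h1v, h2v]
                rw [hx]; exact goal_s3
              · have hx : x = ![0,-1,2] := by funext i; fin_cases i <;> simp [hx0, h1v, h2v]
                rw [hx]; exact goal_t4
              · have hx : x = ![0,-1,-2] := by funext i; fin_cases i <;> simp [hx0, h1v, h2v]
                rw [hx]; exact goal_s4
            · have hx1 : x 1 ^ 2 = 1 := by nlinarith
              have hx2 : x 2 = 0 := by nlinarith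
              have hx0 : x 0 ^ 2 = 4 := by nlinarith
              rcases int_sq_eq_one hx1 with h1v | h1v <;> rcases int_sq_eq_four hx0 with h0v | h0v
              · have hx : x = ![2,1,0] := by funext i; fin_cases i <;> simp [hx2, h1v, h0v]
                rw [hx]; exact goal_t1
              · have hx : x = ![-2,1,0] := by funext i; fin_cases i <;> simp [hx2, h1v, h0v]
                rw [hx]; exact goal_s1
              · have hx : x = ![2,-1,0] := by funext i; fin_cases i <;> simp [hx2, h1v, h0v]
                rw [hx]; exact goal_t2
              · have hx : x = ![-2,-1,0] := by funext i; fin_cases i <;> simp [hx2, h1v, h0v]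
                rw [hx]; exact goal_s2
            · exfalso; nlinarith

lemma orbit_inv8 {x δ : Fin 3 → ℤ} (hδ : qf δ = 2) (h : InOrbit x δ) :
    inv8 x = inv8 δ := by
  obtain ⟨M, hM, rfl⟩ := h
  exact (orbit_invariant hM δ hδ).2

lemma inv_pp : inv8 ![1,0,1] = (0,0) := by rw [inv8_vec]; push_cast; decide
lemma inv_nn : inv8 ![-1,0,-1] = (1,1) := by rw [inv8_vec]; push_cast; decide
lemma inv_np : inv8 ![-1,0,1] = (0,1) := by rw [inv8_vec]; push_cast; decide
lemma inv_t : inv8 ![2,1,0] = (2,4) := by rw [inv8_vec]; push_cast; decide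
lemma inv_s : inv8 ![-2,1,0] = (3,4) := by rw [inv8_vec]; push_cast; decide

lemma qf_pp : qf ![1,0,1] = 2 := by rw [qf_vec]; norm_num
lemma qf_nn : qf ![-1,0,-1] = 2 := by rw [qf_vec]; norm_num
lemma qf_np : qf ![-1,0,1] = 2 := by rw [qf_vec]; norm_num
lemma qf_t : qf ![2,1,0] = 2 := by rw [qf_vec]; norm_num
lemma qf_s : qf ![-2,1,0] = 2 := by rw [qf_vec]; norm_num

lemma orbit_iff (x : Fin 3 → ℤ) (hq : qf x = 2) :
    (InOrbit x ![1,0,1] ↔ inv8 x = (0,0)) ∧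
    (InOrbit x ![-1,0,-1] ↔ inv8 x = (1,1)) ∧
    (InOrbit x ![-1,0,1] ↔ inv8 x = (0,1)) ∧
    (InOrbit x ![2,1,0] ↔ inv8 x = (2,4)) ∧
    (InOrbit x ![-2,1,0] ↔ inv8 x = (3,4)) := by
  have hg : Goal x := descent _ x rfl hq
  have e1 : InOrbit x ![1,0,1] → inv8 x = (0,0) :=
    fun h => (orbit_inv8 qf_pp h).trans inv_pp
  have e2 : InOrbit x ![-1,0,-1] → inv8 x = (1,1) :=
    fun h => (orbit_inv8 qf_nn h).trans inv_nn
  have e3 : InOrbit x ![-1,0,1] → inv8 x = (0,1) :=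
    fun h => (orbit_inv8 qf_np h).trans inv_np
  have e4 : InOrbit x ![2,1,0] → inv8 x = (2,4) :=
    fun h => (orbit_inv8 qf_t h).trans inv_t
  have e5 : InOrbit x ![-2,1,0] → inv8 x = (3,4) :=
    fun h => (orbit_inv8 qf_s h).trans inv_s
  refine ⟨⟨e1, fun hv => ?_⟩, ⟨e2, fun hv => ?_⟩, ⟨e3, fun hv => ?_⟩,
    ⟨e4, fun hv => ?_⟩, ⟨e5, fun hv => ?_⟩⟩ <;>
    rcases hg with h|h|h|h|h <;>
    first
      | exact h
      | (exfalso
         first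
           | (rw [e1 h] at hv; exact absurd hv (by decide))
           | (rw [e2 h] at hv; exact absurd hv (by decide))
           | (rw [e3 h] at hv; exact absurd hv (by decide))
           | (rw [e4 h] at hv; exact absurd hv (by decide))
           | (rw [e5 h] at hv; exact absurd hv (by decide)))

lemma modeq_iff_cast (a b : ℤ) : a ≡ b [ZMOD (8:ℤ)] ↔ ((a : ZMod 8) = (b : ZMod 8)) := by
  have h := ZMod.intCast_eq_intCast_iff a b 8
  rw [show ((8:ℕ):ℤ) = (8:ℤ) by norm_num] at h
  exact h.symm

lemma ztrans1 : ∀ a b c : ZMod 8, a^2 - 2*b^2 + c^2 = 2 →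
    (pcl a c = (0,0) ↔ ((a = 1 ∨ a = 3) ∧ (c = 1 ∨ c = 3))) := by decide
lemma ztrans2 : ∀ a b c : ZMod 8, a^2 - 2*b^2 + c^2 = 2 →
    (pcl a c = (1,1) ↔ ((a = -1 ∨ a = -3) ∧ (c = -1 ∨ c = -3))) := by decide
lemma ztrans3 : ∀ a b c : ZMod 8, a^2 - 2*b^2 + c^2 = 2 →
    (pcl a c = (0,1) ↔
      (((a = -1 ∨ a = -3) ∧ (c = 1 ∨ c = 3)) ∨
       ((c = -1 ∨ c = -3) ∧ (a = 1 ∨ a = 3)))) := by decide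
lemma ztrans4 : ∀ a b c : ZMod 8, a^2 - 2*b^2 + c^2 = 2 →
    (pcl a c = (2,4) ↔ (a = 2 ∨ c = 2)) := by decide
lemma ztrans5 : ∀ a b c : ZMod 8, a^2 - 2*b^2 + c^2 = 2 →
    (pcl a c = (3,4) ↔ (a = -2 ∨ c = -2)) := by decide

/-- The orbit of a length-3 Büchi sequence is determined by the residues of
`x₁` and `x₃` modulo 8. -/
theorem orbit_mod_eight (x : Fin 3 → ℤ)
    (hx : x 0 ^ 2 - 2 * x 1 ^ 2 + x 2 ^ 2 = 2) :
    (InOrbit x ![1, 0, 1] ↔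
      ((x 0 ≡ 1 [ZMOD 8] ∨ x 0 ≡ 3 [ZMOD 8]) ∧
       (x 2 ≡ 1 [ZMOD 8] ∨ x 2 ≡ 3 [ZMOD 8]))) ∧
    (InOrbit x ![-1, 0, -1] ↔
      ((x 0 ≡ -1 [ZMOD 8] ∨ x 0 ≡ -3 [ZMOD 8]) ∧
       (x 2 ≡ -1 [ZMOD 8] ∨ x 2 ≡ -3 [ZMOD 8]))) ∧
    (InOrbit x ![-1, 0, 1] ↔
      (((x 0 ≡ -1 [ZMOD 8] ∨ x 0 ≡ -3 [ZMOD 8]) ∧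
        (x 2 ≡ 1 [ZMOD 8] ∨ x 2 ≡ 3 [ZMOD 8])) ∨
       ((x 2 ≡ -1 [ZMOD 8] ∨ x 2 ≡ -3 [ZMOD 8]) ∧
        (x 0 ≡ 1 [ZMOD 8] ∨ x 0 ≡ 3 [ZMOD 8])))) ∧
    (InOrbit x ![2, 1, 0] ↔ (x 0 ≡ 2 [ZMOD 8] ∨ x 2 ≡ 2 [ZMOD 8])) ∧
    (InOrbit x ![-2, 1, 0] ↔ (x 0 ≡ -2 [ZMOD 8] ∨ x 2 ≡ -2 [ZMOD 8])) := by
  have hq : qf x = 2 := hx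
  have h8 := qcast hq
  obtain ⟨o1, o2, o3, o4, o5⟩ := orbit_iff x hq
  refine ⟨?_, ?_, ?_, ?_, ?_⟩
  · rw [o1]
    simp only [inv8, modeq_iff_cast]
    push_cast
    exact ztrans1 _ (x 1) _ h8
  · rw [o2]
    simp only [inv8, modeq_iff_cast]
    push_cast
    exact ztrans2 _ (x 1) _ h8
  · rw [o3]
    simp only [inv8, modeq_iff_cast]
    push_cast
    exact ztrans3 _ (x 1) _ h8
  · rw [o4]
    simp only [inv8, modeq_iff_cast]
    push_cast
    exact ztrans4 _ (x 1) _ h8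
  · rw [o5]
    simp only [inv8, modeq_iff_cast]
    push_cast
    exact ztrans5 _ (x 1) _ h8
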